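/- Let (y_{i,j}) be a point of the type A_n Gelfand–Tsetlin polytope GT_{A_n}(λ). If every entry equals its upper-left or its upper-right neighbor — that is, y_{1,j} ∈ {λ_j, λ_{j+1}} for all 1 ≤ j ≤ n, and y_{i,j} ∈ {y_{i−1,j−1}, y_{i−1,j}} for all 2 ≤ i ≤ j ≤ n — then (y_{i,j}) is a vertex (extreme point) of GT_{A_n}(λ). -/

import Mathlib

/-- Index set for type `Aₙ` Gelfand–Tsetlin patterns: pairs `(i, j)` with `1 ≤ i ≤ j ≤ n`. -/
abbrev GTAIdx (n : ℕ) := {p : ℕ × ℕ // 1 ≤ p.1 ∧ p.1 ≤ p.2 ∧ p.2 ≤ n}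

/-- The `(i, j)` coordinate of a point `y : ℝ^{n(n+1)/2}` (and `0` for out-of-range indices). -/
def gtaC (n : ℕ) (y : GTAIdx n → ℝ) (i j : ℕ) : ℝ :=
  if h : 1 ≤ i ∧ i ≤ j ∧ j ≤ n then y ⟨(i, j), h⟩ else 0

/-- The type `Aₙ` Gelfand–Tsetlin polytope of `λ` (with the convention `λ_{n+1} = 0`
encoded by the value `lam (n+1)`). -/
def GTA (n : ℕ) (lam : ℕ → ℝ) : Set (GTAIdx n → ℝ) :=
  {y | (∀ j, 1 ≤ j → j ≤ n → lam j ≥ gtaC n y 1 j ∧ gtaC n y 1 j ≥ lam (j + 1)) ∧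
       (∀ i j, 2 ≤ i → i ≤ j → j ≤ n →
          gtaC n y (i - 1) (j - 1) ≥ gtaC n y i j ∧ gtaC n y i j ≥ gtaC n y (i - 1) j)}

private lemma gta_convex_le (a b u v w : ℝ) (ha : 0 < a) (hb : 0 < b) (hab : a + b = 1)
    (h : a * u + b * v = w) (hu : u ≤ w) (hv : v ≤ w) : u = w ∧ v = w := by
  have hw : a * w + b * w = w := by rw [← add_mul, hab, one_mul]
  have h1 : a * u ≤ a * w := mul_le_mul_of_nonneg_left hu ha.le
  have h2 : b * v ≤ b * w := mul_le_mul_of_nonneg_left hv hb.le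
  have e1 : a * u = a * w := by linarith
  have e2 : b * v = b * w := by linarith
  exact ⟨mul_left_cancel₀ ha.ne' e1, mul_left_cancel₀ hb.ne' e2⟩

private lemma gta_convex_ge (a b u v w : ℝ) (ha : 0 < a) (hb : 0 < b) (hab : a + b = 1)
    (h : a * u + b * v = w) (hu : w ≤ u) (hv : w ≤ v) : u = w ∧ v = w := by
  have hw : a * w + b * w = w := by rw [← add_mul, hab, one_mul]
  have h1 : a * w ≤ a * u := mul_le_mul_of_nonneg_left hu ha.le
  have h2 : b * w ≤ b * v := mul_le_mul_of_nonneg_left hv hb.le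
  have e1 : a * u = a * w := by linarith
  have e2 : b * v = b * w := by linarith
  exact ⟨mul_left_cancel₀ ha.ne' e1, mul_left_cancel₀ hb.ne' e2⟩

/-- If every entry of a type `Aₙ` Gelfand–Tsetlin pattern equals its upper-left or its
upper-right neighbor, then the pattern is a vertex of the Gelfand–Tsetlin polytope. -/
theorem statement3 (n : ℕ) (hn : 1 ≤ n) (lam : ℕ → ℝ)
    (hmono : ∀ j, 1 ≤ j → j + 1 ≤ n → lam (j + 1) ≤ lam j)
    (hpos : 0 ≤ lam n) (hzero : lam (n + 1) = 0)
    (y : GTAIdx n → ℝ) (hy : y ∈ GTA n lam)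
    (h1 : ∀ j, 1 ≤ j → j ≤ n → gtaC n y 1 j = lam j ∨ gtaC n y 1 j = lam (j + 1))
    (h2 : ∀ i j, 2 ≤ i → i ≤ j → j ≤ n →
      gtaC n y i j = gtaC n y (i - 1) (j - 1) ∨ gtaC n y i j = gtaC n y (i - 1) j) :
    y ∈ (GTA n lam).extremePoints ℝ := by
  refine ⟨hy, ?_⟩
  intro x1 hx1 x2 hx2 hseg
  obtain ⟨a, b, ha, hb, hab, hsum⟩ := hseg
  have hpt : ∀ i j (h : 1 ≤ i ∧ i ≤ j ∧ j ≤ n),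
      a * gtaC n x1 i j + b * gtaC n x2 i j = gtaC n y i j := by
    intro i j h
    have := congrFun hsum ⟨(i, j), h⟩
    simpa [gtaC, dif_pos h] using this
  have key : ∀ i j, 1 ≤ i → i ≤ j → j ≤ n →
      gtaC n x1 i j = gtaC n y i j ∧ gtaC n x2 i j = gtaC n y i j := by
    intro i
    induction i with
    | zero => intro j h; omega
    | succ i ih =>
      intro j h1i hij hjn
      have hidx : 1 ≤ i + 1 ∧ i + 1 ≤ j ∧ j ≤ n := ⟨h1i, hij, hjn⟩
      have hs := hpt (i + 1) j hidx
      rcases Nat.eq_zero_or_pos i with rfl | hipos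
      · -- row 1
        have hj1 : 1 ≤ j := hij
        rcases h1 j hj1 hjn with hv | hv
        · have hu1 := (hx1.1 j hj1 hjn).1
          have hu2 := (hx2.1 j hj1 hjn).1
          rw [hv] at hs ⊢
          exact gta_convex_le a b _ _ _ ha hb hab hs hu1 hu2
        · have hu1 := (hx1.1 j hj1 hjn).2
          have hu2 := (hx2.1 j hj1 hjn).2
          rw [hv] at hs ⊢
          exact gta_convex_ge a b _ _ _ ha hb hab hs hu1 hu2
      · -- row i+1 ≥ 2
        have h2i : 2 ≤ i + 1 := by omega
        have hsub : i + 1 - 1 = i := rfl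
        have ihl := ih (j - 1) hipos (by omega) (by omega)
        have ihr := ih j hipos (by omega) hjn
        have hc1 := hx1.2 (i + 1) j h2i hij hjn
        have hc2 := hx2.2 (i + 1) j h2i hij hjn
        rw [hsub] at hc1 hc2
        rcases h2 (i + 1) j h2i hij hjn with hv | hv
        · rw [hsub] at hv
          rw [hv] at hs
          have hu1 : gtaC n x1 (i + 1) j ≤ gtaC n y i (j - 1) := by linarith [hc1.1, ihl.1]
          have hu2 : gtaC n x2 (i + 1) j ≤ gtaC n y i (j - 1) := by linarith [hc2.1, ihl.2]
          have := gta_convex_le a b _ _ _ ha hb hab hs hu1 hu2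
          rw [hv]; exact this
        · rw [hsub] at hv
          rw [hv] at hs
          have hu1 : gtaC n y i j ≤ gtaC n x1 (i + 1) j := by linarith [hc1.2, ihr.1]
          have hu2 : gtaC n y i j ≤ gtaC n x2 (i + 1) j := by linarith [hc2.2, ihr.2]
          have := gta_convex_ge a b _ _ _ ha hb hab hs hu1 hu2
          rw [hv]; exact this
  have hval : ∀ c : GTAIdx n, x1 c = y c ∧ x2 c = y c := by
    rintro ⟨⟨i, j⟩, h⟩
    have := key i j h.1 h.2.1 h.2.2
    simpa [gtaC, dif_pos h] using this
  funext c
  exact (hval c).1
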